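/- Let n > 2 and m > 2 be even integers, let f : 𝔽₂ⁿ → 𝔽₂ and g : 𝔽₂^m → 𝔽₂ be bent functions, let μ ∈ {1,…,n}, ρ ∈ {1,…,m}, let f₀, f₁ be the restrictions of f at coordinate μ and g₀, g₁ the restrictions of g at coordinate ρ, and let h : 𝔽₂^{n−1} × 𝔽₂^{m−1} → 𝔽₂ be defined by h(x,y) = f₀(x) ⊕ g₀(y) ⊕ (f₀(x)⊕f₁(x))·(g₀(y)⊕g₁(y)). Then 2 ≤ deg(h) ≤ (n+m−2)/2 − 1, where deg denotes the algebraic degree. -/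

import Mathlib

open Finset

/-- The sign `(-1)^b` for `b ∈ 𝔽₂`. -/
def chi (b : ZMod 2) : ℤ := if b = 0 then 1 else -1

/-- The Walsh transform of a Boolean function in `n` variables. -/
def walsh {n : ℕ} (f : (Fin n → ZMod 2) → ZMod 2) (ω : Fin n → ZMod 2) : ℤ :=
  ∑ x : Fin n → ZMod 2, chi (f x + ∑ i, ω i * x i)

/-- The Walsh transform of a Boolean function given on a product `𝔽₂ⁿ × 𝔽₂^m`. -/
def walsh2 {n m : ℕ} (f : (Fin n → ZMod 2) → (Fin m → ZMod 2) → ZMod 2)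
    (α : Fin n → ZMod 2) (β : Fin m → ZMod 2) : ℤ :=
  ∑ x : Fin n → ZMod 2, ∑ y : Fin m → ZMod 2,
    chi (f x y + (∑ i, α i * x i) + (∑ j, β j * y j))

/-- A Boolean function in `n` variables is bent if its Walsh transform only
takes the values `±2^(n/2)`. -/
def IsBent (n : ℕ) (f : (Fin n → ZMod 2) → ZMod 2) : Prop :=
  ∀ a, walsh f a = 2 ^ (n / 2) ∨ walsh f a = -(2 ^ (n / 2))

/-- Bentness for a function given on a product, i.e. as a function in `n + m` variables. -/
def IsBent2 (n m : ℕ) (f : (Fin n → ZMod 2) → (Fin m → ZMod 2) → ZMod 2) : Prop :=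
  ∀ α β, walsh2 f α β = 2 ^ ((n + m) / 2) ∨ walsh2 f α β = -(2 ^ ((n + m) / 2))

/-- `fd` is the dual of a bent function `f`:  `W_f(ω) = 2^(n/2) (−1)^{fd(ω)}`. -/
def IsDual {n : ℕ} (f fd : (Fin n → ZMod 2) → ZMod 2) : Prop :=
  ∀ ω, walsh f ω = 2 ^ (n / 2) * chi (fd ω)

/-- The dual for a bent function given on a product (a function of `n + m` variables). -/
def IsDual2 {n m : ℕ} (f fd : (Fin n → ZMod 2) → (Fin m → ZMod 2) → ZMod 2) : Prop :=
  ∀ α β, walsh2 f α β = 2 ^ ((n + m) / 2) * chi (fd α β)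

/-- Insert the bit `b` at position `μ`, giving a vector of length `n` from one of length `n-1`. -/
def insertAt {n : ℕ} (μ : Fin n) (b : ZMod 2) (x : Fin (n - 1) → ZMod 2) : Fin n → ZMod 2 :=
  fun i =>
    if h : (i : ℕ) < (μ : ℕ) then x ⟨i, by have := μ.isLt; omega⟩
    else if h' : (μ : ℕ) < (i : ℕ) then x ⟨(i : ℕ) - 1, by have := i.isLt; omega⟩
    else b

/-- Hamming weight of a vector in `𝔽₂ⁿ`. -/
def wt {n : ℕ} (ω : Fin n → ZMod 2) : ℕ := (Finset.univ.filter fun i => ω i ≠ 0).card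

/-- `t`-resiliency (with `t : ℤ`, so that the convention that every function is
`(-1)`-resilient holds). -/
def Resilient {n : ℕ} (t : ℤ) (f : (Fin n → ZMod 2) → ZMod 2) : Prop :=
  ∀ ω, (wt ω : ℤ) ≤ t → walsh f ω = 0

/-- `t`-resiliency for a function given on a product `𝔽₂ⁿ × 𝔽₂^m`. -/
def Resilient2 {n m : ℕ} (t : ℤ) (f : (Fin n → ZMod 2) → (Fin m → ZMod 2) → ZMod 2) : Prop :=
  ∀ α β, (wt α + wt β : ℤ) ≤ t → walsh2 f α β = 0

/-- Coefficient of the monomial `∏_{i ∈ S} x_i` in the algebraic normal form of `f`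
(Möbius inversion over the subsets of `S`). -/
def anf {n : ℕ} (f : (Fin n → ZMod 2) → ZMod 2) (S : Finset (Fin n)) : ZMod 2 :=
  ∑ T ∈ S.powerset, f fun i => if i ∈ T then 1 else 0

/-- The algebraic degree of a Boolean function: the largest size of a monomial with
nonzero coefficient in its algebraic normal form. -/
def algDeg {n : ℕ} (f : (Fin n → ZMod 2) → ZMod 2) : ℕ :=
  ((Finset.univ : Finset (Finset (Fin n))).filter fun S => anf f S ≠ 0).sup Finset.card

/-- View a function on `𝔽₂ⁿ × 𝔽₂^m` as a Boolean function in `n + m` variables. -/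
def join {n m : ℕ} (h : (Fin n → ZMod 2) → (Fin m → ZMod 2) → ZMod 2) :
    (Fin (n + m) → ZMod 2) → ZMod 2 :=
  fun z => h (fun i => z (Fin.castAdd m i)) (fun j => z (Fin.natAdd n j))

def ind {n : ℕ} (T : Finset (Fin n)) : Fin n → ZMod 2 := fun i => if i ∈ T then 1 else 0

lemma zmod2_cases (a : ZMod 2) : a = 0 ∨ a = 1 := by revert a; decide

lemma chi_add (a b : ZMod 2) : chi (a + b) = chi a * chi b := by revert a b; decide

lemma insert_injOn_powerset {α : Type*} [DecidableEq α] (a : α) (P : Finset α) (haP : a ∉ P) :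
    ∀ x ∈ P.powerset, ∀ y ∈ P.powerset, insert a x = insert a y → x = y := by
  intro x hx y hy hxy
  have hax : a ∉ x := fun hh => haP (Finset.mem_powerset.mp hx hh)
  have hay : a ∉ y := fun hh => haP (Finset.mem_powerset.mp hy hh)
  have := congrArg (Finset.erase · a) hxy
  simpa [Finset.erase_insert hax, Finset.erase_insert hay] using this

lemma disj_powerset_insert {α : Type*} [DecidableEq α] (a : α) (P : Finset α) (haP : a ∉ P) :
    Disjoint P.powerset (P.powerset.image (insert a)) := by
  rw [Finset.disjoint_left]
  intro x hx hx2
  obtain ⟨u, hu, rfl⟩ := Finset.mem_image.mp hx2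
  exact haP (Finset.mem_powerset.mp hx (Finset.mem_insert_self a u))

lemma sum_powerset_insert' {M : Type*} [AddCommMonoid M] {α : Type*} [DecidableEq α]
    (a : α) (P : Finset α) (haP : a ∉ P) (F : Finset α → M) :
    ∑ U ∈ (insert a P).powerset, F U
      = (∑ U ∈ P.powerset, F U) + ∑ U ∈ P.powerset, F (insert a U) := by
  rw [Finset.powerset_insert, Finset.sum_union (disj_powerset_insert a P haP),
    Finset.sum_image (insert_injOn_powerset a P haP)]

lemma sum_pow_pow {α : Type*} [DecidableEq α] (T : Finset α) (F : Finset α → ZMod 2) :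
    ∑ S ∈ T.powerset, ∑ U ∈ S.powerset, F U = F T := by
  induction T using Finset.induction generalizing F with
  | empty => simp
  | insert a T ha ih =>
    rw [sum_powerset_insert' a T ha]
    have key : ∀ S ∈ T.powerset, ∑ U ∈ (insert a S).powerset, F U
        = (∑ U ∈ S.powerset, F U) + ∑ U ∈ S.powerset, F (insert a U) := by
      intro S hS
      exact sum_powerset_insert' a S (fun hh => ha (Finset.mem_powerset.mp hS hh)) F
    rw [Finset.sum_congr rfl key, Finset.sum_add_distrib, ih F,
      ih (fun U => F (insert a U))]
    have : F T + F T = 0 := by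
      have := zmod2_cases (F T); rcases this with h | h <;> rw [h] <;> decide
    rw [← add_assoc, this, zero_add]

lemma anf_eq {n : ℕ} (f : (Fin n → ZMod 2) → ZMod 2) (S : Finset (Fin n)) :
    (∑ T ∈ S.powerset, f (ind T)) = ∑ T ∈ S.powerset, f (fun i => if i ∈ T then 1 else 0) := rfl

def supp {n : ℕ} (x : Fin n → ZMod 2) : Finset (Fin n) := Finset.univ.filter fun i => x i ≠ 0

lemma ind_supp {n : ℕ} (x : Fin n → ZMod 2) : ind (supp x) = x := by
  funext i
  rcases zmod2_cases (x i) with h | h <;> simp [ind, supp, h]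

lemma anf_def {n : ℕ} (f : (Fin n → ZMod 2) → ZMod 2) (S : Finset (Fin n)) :
    anf f S = ∑ T ∈ S.powerset, f (ind T) := rfl

lemma eval_anf {n : ℕ} (f : (Fin n → ZMod 2) → ZMod 2) (T : Finset (Fin n)) :
    ∑ S ∈ T.powerset, anf f S = f (ind T) := by
  simp only [anf_def]
  exact sum_pow_pow T (fun U => f (ind U))

lemma eval_anf' {n : ℕ} (f : (Fin n → ZMod 2) → ZMod 2) (x : Fin n → ZMod 2) :
    f x = ∑ S ∈ (supp x).powerset, anf f S := by
  rw [eval_anf, ind_supp]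

lemma dot_ind {n : ℕ} (U : Finset (Fin n)) (x : Fin n → ZMod 2) :
    ∑ i, ind U i * x i = ∑ i ∈ U, x i := by
  have h1 : ∀ i, ind U i * x i = if i ∈ U then x i else 0 := by
    intro i; by_cases h : i ∈ U <;> simp [ind, h]
  simp only [h1, Finset.sum_ite_mem, Finset.univ_inter]

lemma sum_chi_powerset {n : ℕ} (A : Finset (Fin n)) (x : Fin n → ZMod 2) :
    ∑ U ∈ A.powerset, chi (∑ i ∈ U, x i)
      = if ∀ i ∈ A, x i = 0 then 2 ^ A.card else 0 := by
  induction A using Finset.induction with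
  | empty => simp [chi]
  | insert a A ha ih =>
    rw [sum_powerset_insert' a A ha]
    have step : ∀ U ∈ A.powerset, chi (∑ i ∈ insert a U, x i) = chi (x a) * chi (∑ i ∈ U, x i) := by
      intro U hU
      have haU : a ∉ U := fun hh => ha (Finset.mem_powerset.mp hU hh)
      rw [Finset.sum_insert haU, chi_add]
    rw [Finset.sum_congr rfl step, ← Finset.mul_sum, ih]
    rcases zmod2_cases (x a) with hxa | hxa
    · by_cases hc : ∀ i ∈ A, x i = 0
      · have h2 : ∀ i ∈ insert a A, x i = 0 := by
          intro i hi; rcases Finset.mem_insert.mp hi with rfl | hi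
          · exact hxa
          · exact hc i hi
        simp only [if_pos hc, if_pos h2, hxa, chi, if_pos rfl,
          Finset.card_insert_of_notMem ha, pow_succ, reduceIte]
        ring
      · have h2 : ¬ ∀ i ∈ insert a A, x i = 0 :=
          fun hp => hc fun i hi => hp i (Finset.mem_insert_of_mem hi)
        simp [hc, h2]
    · have h2 : ¬ ∀ i ∈ insert a A, x i = 0 := by
        intro hp
        have := hp a (Finset.mem_insert_self a A)
        rw [hxa] at this; exact one_ne_zero this
      have hchi : chi (x a) = -1 := by rw [hxa]; decide
      rw [if_neg h2, hchi]
      by_cases hc : ∀ i ∈ A, x i = 0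
      · ring
      · ring

lemma supp_ind {n : ℕ} (U : Finset (Fin n)) : supp (ind U) = U := by
  ext i; by_cases h : i ∈ U <;> simp [supp, ind, h]

lemma walsh_sum_powerset {n : ℕ} (f : (Fin n → ZMod 2) → ZMod 2) (T : Finset (Fin n)) :
    ∑ U ∈ Tᶜ.powerset, walsh f (ind U)
      = 2 ^ (n - T.card) * ∑ U ∈ T.powerset, chi (f (ind U)) := by
  have step1 : ∀ U : Finset (Fin n), walsh f (ind U)
      = ∑ x : Fin n → ZMod 2, chi (f x) * chi (∑ i ∈ U, x i) := by
    intro U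
    unfold walsh
    refine Finset.sum_congr rfl fun x _ => ?_
    rw [chi_add, dot_ind]
  simp only [step1]
  rw [Finset.sum_comm]
  have step2 : ∀ x : Fin n → ZMod 2,
      ∑ U ∈ Tᶜ.powerset, chi (f x) * chi (∑ i ∈ U, x i)
        = chi (f x) * (if ∀ i ∈ Tᶜ, x i = 0 then 2 ^ Tᶜ.card else 0) := by
    intro x
    rw [← Finset.mul_sum, sum_chi_powerset]
  simp only [step2]
  have hcard : (Tᶜ : Finset (Fin n)).card = n - T.card := by
    rw [Finset.card_compl, Fintype.card_fin]
  rw [hcard]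
  have step3 : ∀ x : Fin n → ZMod 2,
      (chi (f x) * if ∀ i ∈ Tᶜ, x i = 0 then (2:ℤ) ^ (n - T.card) else 0)
        = if supp x ∈ T.powerset then 2 ^ (n - T.card) * chi (f x) else 0 := by
    intro x
    have hiff : (∀ i ∈ Tᶜ, x i = 0) ↔ supp x ∈ T.powerset := by
      simp only [Finset.mem_powerset, Finset.subset_iff, supp, Finset.mem_filter,
        Finset.mem_compl, Finset.mem_univ, true_and]
      constructor
      · intro hp i hi
        by_contra hiT
        exact hi (hp i hiT)
      · intro hp i hi
        by_contra hxi
        exact hi (hp hxi)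
    by_cases hc : supp x ∈ T.powerset
    · rw [if_pos (hiff.mpr hc), if_pos hc]; ring
    · rw [if_neg (fun hp => hc (hiff.mp hp)), if_neg hc]; ring
  simp only [step3]
  rw [Finset.sum_ite, Finset.sum_const_zero, add_zero, Finset.mul_sum]
  refine Finset.sum_nbij' (fun x => supp x) (fun U => ind U) ?_ ?_ ?_ ?_ ?_
  · intro x hx
    exact (Finset.mem_filter.mp hx).2
  · intro U hU
    simp [supp_ind, Finset.mem_powerset.mp hU]
  · intro x _
    exact ind_supp x
  · intro U _
    exact supp_ind U
  · intro x _
    rw [ind_supp]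

lemma bent_anf_card {n : ℕ} (hn4 : 4 ≤ n) (hne : Even n)
    (f : (Fin n → ZMod 2) → ZMod 2) (hf : IsBent n f)
    (T : Finset (Fin n)) (hT : n / 2 < T.card) : anf f T = 0 := by
  classical
  set t := T.card with ht
  have htn : t ≤ n := by
    simpa using Finset.card_le_card (Finset.subset_univ T)
  have hn2' : n = 2 * (n / 2) := by
    obtain ⟨r, hr⟩ := hne; omega
  -- K : signed count
  set K : ℤ := ∑ U ∈ Tᶜ.powerset, (if walsh f (ind U) = 2 ^ (n / 2) then (1:ℤ) else -1) with hK
  have hWsum : ∑ U ∈ Tᶜ.powerset, walsh f (ind U) = 2 ^ (n / 2) * K := by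
    rw [hK, Finset.mul_sum]
    refine Finset.sum_congr rfl fun U _ => ?_
    have hpos : (0:ℤ) < 2 ^ (n / 2) := by positivity
    rcases hf (ind U) with h | h
    · rw [h, if_pos rfl]; ring
    · rw [h, if_neg (by intro heq; linarith)]; ring
  -- parity of K
  have hKparity : (2:ℤ) ∣ K - (Tᶜ.powerset.card : ℤ) := by
    have : K - (Tᶜ.powerset.card : ℤ)
        = ∑ U ∈ Tᶜ.powerset, ((if walsh f (ind U) = 2 ^ (n / 2) then (1:ℤ) else -1) - 1) := by
      rw [Finset.sum_sub_distrib, Finset.sum_const, hK]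
      push_cast; ring
    rw [this]
    refine Finset.dvd_sum fun U _ => ?_
    by_cases h : walsh f (ind U) = 2 ^ (n / 2) <;> simp [h]
  have hPcard : (Tᶜ.powerset.card : ℤ) = 2 ^ (n - t) := by
    rw [Finset.card_powerset, Finset.card_compl, Fintype.card_fin]
    push_cast; ring
  -- M : number of ones
  set M : ℕ := (T.powerset.filter fun U => f (ind U) = 1).card with hM
  have hchiSum : ∑ U ∈ T.powerset, chi (f (ind U)) = 2 ^ t - 2 * M := by
    have : ∀ U ∈ T.powerset, chi (f (ind U)) = 1 - 2 * (if f (ind U) = 1 then (1:ℤ) else 0) := by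
      intro U _
      rcases zmod2_cases (f (ind U)) with h | h <;> rw [h] <;> decide
    rw [Finset.sum_congr rfl this, Finset.sum_sub_distrib, Finset.sum_const,
      Finset.card_powerset, ← Finset.mul_sum, Finset.sum_boole, hM]
    push_cast; ring
  have hanf : anf f T = (M : ZMod 2) := by
    rw [anf_def]
    have : ∀ U ∈ T.powerset, f (ind U) = (if f (ind U) = 1 then (1:ZMod 2) else 0) := by
      intro U _
      rcases zmod2_cases (f (ind U)) with h | h <;> rw [h] <;> decide
    rw [Finset.sum_congr rfl this, Finset.sum_boole, hM]
  -- the key equation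
  have hkey : 2 ^ (n - t) * (2 ^ t - 2 * M) = 2 ^ (n / 2) * K := by
    rw [← hchiSum, ← hWsum, walsh_sum_powerset]
  have hexp : 2 ^ (n - t) * (2:ℤ) ^ t = 2 ^ n := by
    rw [← pow_add, Nat.sub_add_cancel htn]
  have hkey2 : 2 ^ (n - t + 1) * (M:ℤ) = 2 ^ n - 2 ^ (n / 2) * K := by
    rw [← hkey]
    rw [mul_sub, hexp]
    ring
  -- divisibility
  have hdvd : (2:ℤ) ^ (n - t + 2) ∣ 2 ^ n - 2 ^ (n / 2) * K := by
    refine dvd_sub ?_ ?_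
    · exact pow_dvd_pow 2 (by omega)
    · by_cases hc : n / 2 + 2 ≤ t
      · exact Dvd.dvd.mul_right (pow_dvd_pow 2 (by omega)) K
      · -- t = n/2 + 1, use K even
        have hteq : t = n / 2 + 1 := by omega
        have hnt : 1 ≤ n - t := by omega
        have hKeven : (2:ℤ) ∣ K := by
          have h2 : (2:ℤ) ∣ (Tᶜ.powerset.card : ℤ) := by
            rw [hPcard]
            exact dvd_pow_self 2 (by omega)
          have heq : K = (K - (Tᶜ.powerset.card : ℤ)) + (Tᶜ.powerset.card : ℤ) := by ring
          rw [heq]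
          exact dvd_add hKparity h2
        obtain ⟨k, hk⟩ := hKeven
        have hnt2 : n - t + 2 = n / 2 + 1 := by omega
        rw [hnt2, hk, pow_succ]
        exact ⟨k, by ring⟩
  have hMeven : (2:ℤ) ∣ (M:ℤ) := by
    rw [← hkey2] at hdvd
    have h1 : (2:ℤ) ^ (n - t + 2) = 2 ^ (n - t + 1) * 2 := by rw [pow_succ]
    rw [h1] at hdvd
    obtain ⟨c, hc⟩ := hdvd
    have hne' : (2:ℤ) ^ (n - t + 1) ≠ 0 := by positivity
    have h2 : (M:ℤ) = 2 * c := mul_left_cancel₀ hne' (by rw [hc]; ring)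
    exact ⟨c, h2⟩
  have hdM : 2 ∣ M := by exact_mod_cast hMeven
  rw [hanf]
  exact (ZMod.natCast_eq_zero_iff M 2).mpr hdM

def emb {n : ℕ} (μ : Fin n) (i : Fin (n - 1)) : Fin n :=
  if h : (i : ℕ) < (μ : ℕ) then ⟨i, by have := μ.isLt; omega⟩
  else ⟨(i : ℕ) + 1, by have := i.isLt; omega⟩

lemma emb_ne {n : ℕ} (μ : Fin n) (i : Fin (n - 1)) : emb μ i ≠ μ := by
  unfold emb
  split <;> (intro hc; apply_fun (Fin.val) at hc; simp at hc; omega)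

lemma emb_inj {n : ℕ} (μ : Fin n) : Function.Injective (emb μ) := by
  intro i j hij
  unfold emb at hij
  apply Fin.ext
  split at hij <;> split at hij <;> (apply_fun Fin.val at hij; simp at hij <;> omega)

lemma insertAt_emb {n : ℕ} (μ : Fin n) (b : ZMod 2) (x : Fin (n - 1) → ZMod 2) (i : Fin (n - 1)) :
    insertAt μ b x (emb μ i) = x i := by
  unfold insertAt emb
  by_cases h : (i : ℕ) < (μ : ℕ)
  · simp [h]
  · have h1 : ¬ ((i : ℕ) + 1 < (μ : ℕ)) := by omega
    have h2 : (μ : ℕ) < (i : ℕ) + 1 := by omega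
    simp only [h, dif_neg, not_false_iff, h1, h2, dif_pos]
    congr 1
    all_goals (apply Fin.ext; simp)

lemma insertAt_self {n : ℕ} (μ : Fin n) (b : ZMod 2) (x : Fin (n - 1) → ZMod 2) :
    insertAt μ b x μ = b := by
  unfold insertAt
  simp

lemma emb_surj {n : ℕ} (μ : Fin n) (j : Fin n) (hj : j ≠ μ) : ∃ i, emb μ i = j := by
  have hjv := j.isLt
  by_cases h : (j : ℕ) < (μ : ℕ)
  · refine ⟨⟨j, by have := μ.isLt; omega⟩, ?_⟩
    unfold emb
    rw [dif_pos (by simpa using h)]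
  · have hne : (j : ℕ) ≠ (μ : ℕ) := fun hc => hj (Fin.ext hc)
    have hgt : (μ : ℕ) < (j : ℕ) := by omega
    refine ⟨⟨(j : ℕ) - 1, by omega⟩, ?_⟩
    unfold emb
    rw [dif_neg (by simp; omega)]
    apply Fin.ext
    simp
    omega

lemma image_emb {n : ℕ} (μ : Fin n) :
    (Finset.univ.image (emb μ)) = Finset.univ.erase μ := by
  ext j
  simp only [Finset.mem_image, Finset.mem_erase, Finset.mem_univ, and_true, true_and]
  constructor
  · rintro ⟨i, _, rfl⟩
    exact emb_ne μ i
  · intro hj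
    obtain ⟨i, hi⟩ := emb_surj μ j hj
    exact ⟨i, hi⟩

lemma sum_emb {n : ℕ} {M : Type*} [AddCommMonoid M] (μ : Fin n) (F : Fin n → M) :
    ∑ j, F j = F μ + ∑ i, F (emb μ i) := by
  rw [← Finset.add_sum_erase Finset.univ F (Finset.mem_univ μ)]
  congr 1
  rw [← image_emb, Finset.sum_image (fun i _ j _ hij => emb_inj μ hij)]

lemma insertAt_recon {n : ℕ} (μ : Fin n) (z : Fin n → ZMod 2) :
    insertAt μ (z μ) (fun i => z (emb μ i)) = z := by
  funext j
  by_cases hj : j = μ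
  · subst hj; rw [insertAt_self]
  · obtain ⟨i, rfl⟩ := emb_surj μ j hj
    rw [insertAt_emb]

def insertEquiv {n : ℕ} (μ : Fin n) : (ZMod 2 × (Fin (n - 1) → ZMod 2)) ≃ (Fin n → ZMod 2) where
  toFun p := insertAt μ p.1 p.2
  invFun z := (z μ, fun i => z (emb μ i))
  left_inv p := by
    refine Prod.ext ?_ ?_
    · simp [insertAt_self]
    · funext i; simp [insertAt_emb]
  right_inv z := insertAt_recon μ z

lemma dot_insertAt {n : ℕ} (μ : Fin n) (c b : ZMod 2) (α x : Fin (n - 1) → ZMod 2) :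
    ∑ j, insertAt μ c α j * insertAt μ b x j = c * b + ∑ i, α i * x i := by
  rw [sum_emb μ]
  rw [insertAt_self]
  congr 1
  · rw [insertAt_self]
  · refine Finset.sum_congr rfl fun i _ => ?_
    rw [insertAt_emb, insertAt_emb]

lemma walsh_insertAt {n : ℕ} (μ : Fin n) (f : (Fin n → ZMod 2) → ZMod 2)
    (f0 f1 : (Fin (n - 1) → ZMod 2) → ZMod 2)
    (hf0 : ∀ x, f0 x = f (insertAt μ 0 x)) (hf1 : ∀ x, f1 x = f (insertAt μ 1 x))
    (c : ZMod 2) (α : Fin (n - 1) → ZMod 2) :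
    walsh f (insertAt μ c α) = walsh f0 α + chi c * walsh f1 α := by
  unfold walsh
  rw [← Equiv.sum_comp (insertEquiv μ)
    (fun z => chi (f z + ∑ j, insertAt μ c α j * z j))]
  rw [Fintype.sum_prod_type]
  rw [show (Finset.univ : Finset (ZMod 2)) = {0, 1} by decide]
  rw [Finset.sum_insert (by decide), Finset.sum_singleton]
  congr 1
  · refine Finset.sum_congr rfl fun x _ => ?_
    simp only [insertEquiv, Equiv.coe_fn_mk]
    rw [dot_insertAt, hf0, mul_zero, zero_add]
  · rw [Finset.mul_sum]
    refine Finset.sum_congr rfl fun x _ => ?_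
    simp only [insertEquiv, Equiv.coe_fn_mk]
    rw [dot_insertAt, hf1, mul_one]
    have : f (insertAt μ 1 x) + (c + ∑ i, α i * x i)
        = c + (f (insertAt μ 1 x) + ∑ i, α i * x i) := by ring
    rw [this, chi_add]

lemma image_preimage_of_subset {α β : Type*} [DecidableEq α] [DecidableEq β]
    {e : α → β} (he : Function.Injective e) {S : Finset α} {U : Finset β}
    (hU : U ⊆ S.image e) :
    (U.preimage e (he.injOn)).image e = U := by
  ext y
  simp only [Finset.mem_image, Finset.mem_preimage]
  constructor
  · rintro ⟨x, hx, rfl⟩; exact hx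
  · intro hy
    obtain ⟨x, _, rfl⟩ := Finset.mem_image.mp (hU hy)
    exact ⟨x, hy, rfl⟩

lemma sum_powerset_image {α β M : Type*} [DecidableEq α] [DecidableEq β] [AddCommMonoid M]
    {e : α → β} (he : Function.Injective e) (S : Finset α) (G : Finset β → M) :
    ∑ U ∈ (S.image e).powerset, G U = ∑ T ∈ S.powerset, G (T.image e) := by
  refine Finset.sum_nbij' (fun U => U.preimage e (he.injOn))
    (fun T => T.image e) ?_ ?_ ?_ ?_ ?_
  · intro U hU
    rw [Finset.mem_powerset] at *
    intro x hx
    rw [Finset.mem_preimage] at hx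
    obtain ⟨x', hx', hee⟩ := Finset.mem_image.mp (hU hx)
    exact he hee ▸ hx'
  · intro T hT
    rw [Finset.mem_powerset] at *
    exact Finset.image_subset_image hT
  · intro U hU
    exact image_preimage_of_subset he (Finset.mem_powerset.mp hU)
  · intro T _
    ext x
    simp only [Finset.mem_preimage, Finset.mem_image]
    constructor
    · rintro ⟨x', hx', hee⟩; exact he hee ▸ hx'
    · intro hx; exact ⟨x, hx, rfl⟩
  · intro U hU
    rw [image_preimage_of_subset he (Finset.mem_powerset.mp hU)]

lemma insertAt_ind0 {n : ℕ} (μ : Fin n) (T : Finset (Fin (n - 1))) :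
    insertAt μ 0 (ind T) = ind (T.image (emb μ)) := by
  funext j
  by_cases hj : j = μ
  · rw [hj, insertAt_self]
    have : μ ∉ T.image (emb μ) := by
      intro hc
      obtain ⟨i, _, hi⟩ := Finset.mem_image.mp hc
      exact emb_ne μ i hi
    simp [ind, this]
  · obtain ⟨i, rfl⟩ := emb_surj μ j hj
    rw [insertAt_emb]
    by_cases hi : i ∈ T
    · simp [ind, hi, Finset.mem_image_of_mem _ hi]
    · have : emb μ i ∉ T.image (emb μ) := by
        intro hc
        obtain ⟨i', hi', hee⟩ := Finset.mem_image.mp hc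
        exact hi (emb_inj μ hee ▸ hi')
      simp [ind, hi, this]

lemma insertAt_ind1 {n : ℕ} (μ : Fin n) (T : Finset (Fin (n - 1))) :
    insertAt μ 1 (ind T) = ind (insert μ (T.image (emb μ))) := by
  funext j
  by_cases hj : j = μ
  · rw [hj, insertAt_self]
    simp [ind]
  · obtain ⟨i, rfl⟩ := emb_surj μ j hj
    rw [insertAt_emb]
    have hne := emb_ne μ i
    by_cases hi : i ∈ T
    · simp [ind, hi, Finset.mem_image_of_mem _ hi]
    · have : emb μ i ∉ T.image (emb μ) := by
        intro hc
        obtain ⟨i', hi', hee⟩ := Finset.mem_image.mp hc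
        exact hi (emb_inj μ hee ▸ hi')
      simp [ind, hi, this, hne]

lemma mu_notmem_image {n : ℕ} (μ : Fin n) (S : Finset (Fin (n - 1))) :
    μ ∉ S.image (emb μ) := by
  intro hc
  obtain ⟨i, _, hi⟩ := Finset.mem_image.mp hc
  exact emb_ne μ i hi

lemma anf_restrict0 {n : ℕ} (μ : Fin n) (f : (Fin n → ZMod 2) → ZMod 2)
    (f0 : (Fin (n - 1) → ZMod 2) → ZMod 2) (hf0 : ∀ x, f0 x = f (insertAt μ 0 x))
    (S : Finset (Fin (n - 1))) :
    anf f0 S = anf f (S.image (emb μ)) := by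
  rw [anf_def, anf_def, sum_powerset_image (emb_inj μ)]
  refine Finset.sum_congr rfl fun T _ => ?_
  rw [hf0, insertAt_ind0]

lemma anf_restrictD {n : ℕ} (μ : Fin n) (f : (Fin n → ZMod 2) → ZMod 2)
    (f0 f1 : (Fin (n - 1) → ZMod 2) → ZMod 2)
    (hf0 : ∀ x, f0 x = f (insertAt μ 0 x)) (hf1 : ∀ x, f1 x = f (insertAt μ 1 x))
    (S : Finset (Fin (n - 1))) :
    anf (fun x => f0 x + f1 x) S = anf f (insert μ (S.image (emb μ))) := by
  rw [anf_def, anf_def, sum_powerset_insert' μ _ (mu_notmem_image μ S),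
    sum_powerset_image (emb_inj μ), sum_powerset_image (emb_inj μ),
    ← Finset.sum_add_distrib]
  refine Finset.sum_congr rfl fun T _ => ?_
  rw [hf0, hf1, insertAt_ind0, insertAt_ind1]

section JoinAnf
variable {N M : ℕ}

lemma castAdd_inj : Function.Injective (Fin.castAdd M : Fin N → Fin (N + M)) := by
  intro a b hab
  apply Fin.ext
  have := congrArg Fin.val hab
  simpa using this

lemma natAdd_inj : Function.Injective (Fin.natAdd N : Fin M → Fin (N + M)) := by
  intro a b hab
  apply Fin.ext
  have := congrArg Fin.val hab
  simp only [Fin.coe_natAdd] at this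
  omega

lemma cast_ne_nat (i : Fin N) (j : Fin M) : Fin.castAdd M i ≠ Fin.natAdd N j := by
  intro hc
  have := congrArg Fin.val hc
  simp only [Fin.coe_castAdd, Fin.coe_natAdd] at this
  have := i.isLt
  omega

lemma castOrNat (j : Fin (N + M)) :
    (∃ i, j = Fin.castAdd M i) ∨ (∃ i, j = Fin.natAdd N i) := by
  by_cases hj : (j : ℕ) < N
  · exact Or.inl ⟨⟨j, hj⟩, Fin.ext (by simp)⟩
  · refine Or.inr ⟨⟨(j : ℕ) - N, by have := j.isLt; omega⟩, Fin.ext ?_⟩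
    simp only [Fin.coe_natAdd]
    omega

noncomputable def pL (T : Finset (Fin (N + M))) : Finset (Fin N) :=
  T.preimage (Fin.castAdd M) castAdd_inj.injOn

noncomputable def pR (T : Finset (Fin (N + M))) : Finset (Fin M) :=
  T.preimage (Fin.natAdd N) natAdd_inj.injOn

lemma mem_pL {T : Finset (Fin (N + M))} {i : Fin N} : i ∈ pL T ↔ Fin.castAdd M i ∈ T := by
  simp [pL]

lemma mem_pR {T : Finset (Fin (N + M))} {i : Fin M} : i ∈ pR T ↔ Fin.natAdd N i ∈ T := by
  simp [pR]

lemma recompose (T : Finset (Fin (N + M))) :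
    (pL T).image (Fin.castAdd M) ∪ (pR T).image (Fin.natAdd N) = T := by
  ext j
  simp only [Finset.mem_union, Finset.mem_image]
  constructor
  · rintro (⟨i, hi, rfl⟩ | ⟨i, hi, rfl⟩)
    · exact mem_pL.mp hi
    · exact mem_pR.mp hi
  · intro hj
    rcases castOrNat j with ⟨i, rfl⟩ | ⟨i, rfl⟩
    · exact Or.inl ⟨i, mem_pL.mpr hj, rfl⟩
    · exact Or.inr ⟨i, mem_pR.mpr hj, rfl⟩

lemma pL_union (A : Finset (Fin N)) (B : Finset (Fin M)) :
    pL (A.image (Fin.castAdd M) ∪ B.image (Fin.natAdd N)) = A := by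
  ext i
  rw [mem_pL]
  simp only [Finset.mem_union, Finset.mem_image]
  constructor
  · rintro (⟨i', hi', hee⟩ | ⟨i', hi', hee⟩)
    · exact castAdd_inj hee ▸ hi'
    · exact absurd hee.symm (cast_ne_nat i i')
  · intro hi
    exact Or.inl ⟨i, hi, rfl⟩

lemma pR_union (A : Finset (Fin N)) (B : Finset (Fin M)) :
    pR (A.image (Fin.castAdd M) ∪ B.image (Fin.natAdd N)) = B := by
  ext i
  rw [mem_pR]
  simp only [Finset.mem_union, Finset.mem_image]
  constructor
  · rintro (⟨i', hi', hee⟩ | ⟨i', hi', hee⟩)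
    · exact absurd hee (cast_ne_nat i' i)
    · exact natAdd_inj hee ▸ hi'
  · intro hi
    exact Or.inr ⟨i, hi, rfl⟩

lemma card_split (T : Finset (Fin (N + M))) : T.card = (pL T).card + (pR T).card := by
  conv_lhs => rw [← recompose T]
  rw [Finset.card_union_of_disjoint, Finset.card_image_of_injective _ castAdd_inj,
    Finset.card_image_of_injective _ natAdd_inj]
  rw [Finset.disjoint_left]
  rintro x hx hx2
  obtain ⟨i, _, rfl⟩ := Finset.mem_image.mp hx
  obtain ⟨i', _, hee⟩ := Finset.mem_image.mp hx2
  exact cast_ne_nat i i' hee.symm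

lemma join_ind (H : (Fin N → ZMod 2) → (Fin M → ZMod 2) → ZMod 2) (T : Finset (Fin (N + M))) :
    join H (ind T) = H (ind (pL T)) (ind (pR T)) := by
  unfold join
  congr 1
  · funext i
    by_cases hi : Fin.castAdd M i ∈ T <;> simp [ind, hi, mem_pL]
  · funext i
    by_cases hi : Fin.natAdd N i ∈ T <;> simp [ind, hi, mem_pR]

lemma anf_join (H : (Fin N → ZMod 2) → (Fin M → ZMod 2) → ZMod 2) (S : Finset (Fin (N + M))) :
    anf (join H) S = ∑ A ∈ (pL S).powerset, ∑ B ∈ (pR S).powerset, H (ind A) (ind B) := by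
  rw [anf_def, ← Finset.sum_product']
  refine Finset.sum_nbij' (fun T => (pL T, pR T))
    (fun p => p.1.image (Fin.castAdd M) ∪ p.2.image (Fin.natAdd N)) ?_ ?_ ?_ ?_ ?_
  · intro T hT
    rw [Finset.mem_powerset] at hT
    rw [Finset.mem_product, Finset.mem_powerset, Finset.mem_powerset]
    constructor
    · intro i hi; exact mem_pL.mpr (hT (mem_pL.mp hi))
    · intro i hi; exact mem_pR.mpr (hT (mem_pR.mp hi))
  · intro p hp
    rw [Finset.mem_product, Finset.mem_powerset, Finset.mem_powerset] at hp
    rw [Finset.mem_powerset]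
    refine Finset.union_subset ?_ ?_
    · intro x hx
      obtain ⟨i, hi, rfl⟩ := Finset.mem_image.mp hx
      exact mem_pL.mp (hp.1 hi)
    · intro x hx
      obtain ⟨i, hi, rfl⟩ := Finset.mem_image.mp hx
      exact mem_pR.mp (hp.2 hi)
  · intro T _
    exact recompose T
  · intro p _
    exact Prod.ext (pL_union p.1 p.2) (pR_union p.1 p.2)
  · intro T _
    exact join_ind H T

end JoinAnf

lemma add_self_zmod2 (a : ZMod 2) : a + a = 0 := by
  rcases zmod2_cases a with h | h <;> rw [h] <;> decide

section Bent2

variable {n m : ℕ}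
  (f0 f1 : (Fin (n - 1) → ZMod 2) → ZMod 2)
  (g0 g1 : (Fin (m - 1) → ZMod 2) → ZMod 2)
  (h : (Fin (n - 1) → ZMod 2) → (Fin (m - 1) → ZMod 2) → ZMod 2)

lemma walsh2_split
    (hh : ∀ x y, h x y = f0 x + g0 y + (f0 x + f1 x) * (g0 y + g1 y))
    (α : Fin (n - 1) → ZMod 2) (β : Fin (m - 1) → ZMod 2) :
    walsh2 h α β
      = (∑ y ∈ Finset.univ.filter (fun y => g0 y + g1 y = 0), chi (g0 y + ∑ j, β j * y j))
          * walsh f0 α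
        + (∑ y ∈ Finset.univ.filter (fun y => ¬ (g0 y + g1 y = 0)), chi (g0 y + ∑ j, β j * y j))
          * walsh f1 α := by
  unfold walsh2
  rw [Finset.sum_comm]
  rw [← Finset.sum_filter_add_sum_filter_not Finset.univ (fun y => g0 y + g1 y = 0)]
  congr 1
  · rw [Finset.sum_mul]
    refine Finset.sum_congr rfl fun y hy => ?_
    have hDg : g0 y + g1 y = 0 := (Finset.mem_filter.mp hy).2
    unfold walsh
    rw [Finset.mul_sum]
    refine Finset.sum_congr rfl fun x _ => ?_
    rw [← chi_add, hh, hDg, mul_zero, add_zero]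
    congr 1
    ring
  · rw [Finset.sum_mul]
    refine Finset.sum_congr rfl fun y hy => ?_
    have hDg : ¬ (g0 y + g1 y = 0) := (Finset.mem_filter.mp hy).2
    have hDg1 : g0 y + g1 y = 1 := by
      rcases zmod2_cases (g0 y + g1 y) with h' | h'
      · exact absurd h' hDg
      · exact h'
    unfold walsh
    rw [Finset.mul_sum]
    refine Finset.sum_congr rfl fun x _ => ?_
    rw [← chi_add, hh, hDg1, mul_one]
    congr 1
    have hkey : f0 x + g0 y + (f0 x + f1 x) = f1 x + g0 y := by
      rw [show f0 x + g0 y + (f0 x + f1 x) = (f0 x + f0 x) + (f1 x + g0 y) by ring,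
        add_self_zmod2, zero_add]
    rw [hkey]
    ring

lemma walsh_g_sum (α : Fin (m - 1) → ZMod 2) :
    (∑ y ∈ Finset.univ.filter (fun y => g0 y + g1 y = 0), chi (g0 y + ∑ j, α j * y j))
      + (∑ y ∈ Finset.univ.filter (fun y => ¬ (g0 y + g1 y = 0)), chi (g0 y + ∑ j, α j * y j))
      = walsh g0 α := by
  rw [Finset.sum_filter_add_sum_filter_not]
  rfl

lemma walsh_g_diff (α : Fin (m - 1) → ZMod 2) :
    (∑ y ∈ Finset.univ.filter (fun y => g0 y + g1 y = 0), chi (g0 y + ∑ j, α j * y j))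
      - (∑ y ∈ Finset.univ.filter (fun y => ¬ (g0 y + g1 y = 0)), chi (g0 y + ∑ j, α j * y j))
      = walsh g1 α := by
  have h1 : ∀ y ∈ Finset.univ.filter (fun y => g0 y + g1 y = 0),
      chi (g0 y + ∑ j, α j * y j) = chi (g1 y + ∑ j, α j * y j) := by
    intro y hy
    have hDg : g0 y + g1 y = 0 := (Finset.mem_filter.mp hy).2
    have : g0 y = g1 y := by
      rcases zmod2_cases (g0 y) with h' | h' <;> rcases zmod2_cases (g1 y) with h'' | h'' <;>
        rw [h', h''] <;> rw [h', h''] at hDg <;> first | rfl | (exfalso; revert hDg; decide)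
    rw [this]
  have h2 : ∀ y ∈ Finset.univ.filter (fun y => ¬ (g0 y + g1 y = 0)),
      chi (g0 y + ∑ j, α j * y j) = - chi (g1 y + ∑ j, α j * y j) := by
    intro y hy
    have hDg : ¬ (g0 y + g1 y = 0) := (Finset.mem_filter.mp hy).2
    have hg01 : g0 y = g1 y + 1 := by
      rcases zmod2_cases (g0 y) with h' | h' <;> rcases zmod2_cases (g1 y) with h'' | h'' <;>
        rw [h', h''] <;> rw [h', h''] at hDg <;> first | rfl | (exfalso; exact hDg (by decide))
    rw [hg01, show g1 y + 1 + ∑ j, α j * y j = 1 + (g1 y + ∑ j, α j * y j) by ring, chi_add]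
    show (-1 : ℤ) * _ = _
    ring
  rw [Finset.sum_congr rfl h1, Finset.sum_congr rfl h2]
  unfold walsh
  rw [Finset.sum_neg_distrib, sub_neg_eq_add, Finset.sum_filter_add_sum_filter_not]

end Bent2

lemma h_walsh2 {n m : ℕ} (hn2 : 2 < n) (hm2 : 2 < m) (hn : Even n) (hm : Even m)
    (f : (Fin n → ZMod 2) → ZMod 2) (g : (Fin m → ZMod 2) → ZMod 2)
    (hf : IsBent n f) (hg : IsBent m g) (μ : Fin n) (ρ : Fin m)
    (f0 f1 : (Fin (n - 1) → ZMod 2) → ZMod 2)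
    (g0 g1 : (Fin (m - 1) → ZMod 2) → ZMod 2)
    (hf0 : ∀ x, f0 x = f (insertAt μ 0 x)) (hf1 : ∀ x, f1 x = f (insertAt μ 1 x))
    (hg0 : ∀ y, g0 y = g (insertAt ρ 0 y)) (hg1 : ∀ y, g1 y = g (insertAt ρ 1 y))
    (h : (Fin (n - 1) → ZMod 2) → (Fin (m - 1) → ZMod 2) → ZMod 2)
    (hh : ∀ x y, h x y = f0 x + g0 y + (f0 x + f1 x) * (g0 y + g1 y))
    (α : Fin (n - 1) → ZMod 2) (β : Fin (m - 1) → ZMod 2) :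
    walsh2 h α β = 2 ^ (n / 2 + m / 2 - 1) ∨ walsh2 h α β = -(2 ^ (n / 2 + m / 2 - 1)) := by
  have hpow2 : (2:ℤ) ^ (m / 2) = 2 * 2 ^ (m / 2 - 1) := by
    rw [← pow_succ']
    congr 1
    omega
  have hpowmul : (2:ℤ) ^ (m / 2 - 1) * 2 ^ (n / 2) = 2 ^ (n / 2 + m / 2 - 1) := by
    rw [← pow_add]
    congr 1
    omega
  have hchi0 : chi 0 = 1 := by decide
  have hchi1 : chi 1 = -1 := by decide
  -- f side
  have hsum := walsh_insertAt μ f f0 f1 hf0 hf1 0 α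
  have hdiff := walsh_insertAt μ f f0 f1 hf0 hf1 1 α
  rw [hchi0, one_mul] at hsum
  rw [hchi1] at hdiff
  set A := walsh f0 α with hA
  set B := walsh f1 α with hB
  have hABcases : (B = 0 ∧ (A = 2 ^ (n / 2) ∨ A = -(2 ^ (n / 2))))
      ∨ (A = 0 ∧ (B = 2 ^ (n / 2) ∨ B = -(2 ^ (n / 2)))) := by
    rcases hf (insertAt μ 0 α) with hs | hs <;> rcases hf (insertAt μ 1 α) with hd | hd <;>
      rw [hsum] at hs <;> rw [hdiff] at hd
    · exact Or.inl ⟨by linarith, Or.inl (by linarith)⟩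
    · exact Or.inr ⟨by linarith, Or.inl (by linarith)⟩
    · exact Or.inr ⟨by linarith, Or.inr (by linarith)⟩
    · exact Or.inl ⟨by linarith, Or.inr (by linarith)⟩
  -- g side
  set C := ∑ y ∈ Finset.univ.filter (fun y => g0 y + g1 y = 0), chi (g0 y + ∑ j, β j * y j)
    with hC
  set D := ∑ y ∈ Finset.univ.filter (fun y => ¬ (g0 y + g1 y = 0)), chi (g0 y + ∑ j, β j * y j)
    with hD
  have hCD1 : C + D = walsh g0 β := walsh_g_sum g0 g1 β
  have hCD2 : C - D = walsh g1 β := walsh_g_diff g0 g1 β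
  have hgsum := walsh_insertAt ρ g g0 g1 hg0 hg1 0 β
  have hgdiff := walsh_insertAt ρ g g0 g1 hg0 hg1 1 β
  rw [hchi0, one_mul, ← hCD1, ← hCD2] at hgsum
  rw [hchi1, ← hCD1, ← hCD2] at hgdiff
  have hCcases : C = 2 ^ (m / 2 - 1) ∨ C = -(2 ^ (m / 2 - 1)) := by
    rcases hg (insertAt ρ 0 β) with hs | hs <;> rw [hgsum, hpow2] at hs
    · exact Or.inl (by linarith)
    · exact Or.inr (by linarith)
  have hDcases : D = 2 ^ (m / 2 - 1) ∨ D = -(2 ^ (m / 2 - 1)) := by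
    rcases hg (insertAt ρ 1 β) with hs | hs <;> rw [hgdiff, hpow2] at hs
    · exact Or.inl (by linarith)
    · exact Or.inr (by linarith)
  have hsplit : walsh2 h α β = C * A + D * B := walsh2_split f0 f1 g0 g1 h hh α β
  rcases hABcases with ⟨hB0, hAv⟩ | ⟨hA0, hBv⟩
  · rw [hsplit, hB0, mul_zero, add_zero]
    rcases hCcases with hCe | hCe <;> rcases hAv with hAe | hAe <;> rw [hCe, hAe]
    · exact Or.inl hpowmul
    · exact Or.inr (by rw [← hpowmul]; ring)
    · exact Or.inr (by rw [← hpowmul]; ring)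
    · exact Or.inl (by rw [← hpowmul]; ring)
  · rw [hsplit, hA0, mul_zero, zero_add]
    rcases hDcases with hDe | hDe <;> rcases hBv with hBe | hBe <;> rw [hDe, hBe]
    · exact Or.inl hpowmul
    · exact Or.inr (by rw [← hpowmul]; ring)
    · exact Or.inr (by rw [← hpowmul]; ring)
    · exact Or.inl (by rw [← hpowmul]; ring)

section WalshJoin
variable {N M : ℕ}

def appendEquiv : ((Fin N → ZMod 2) × (Fin M → ZMod 2)) ≃ (Fin (N + M) → ZMod 2) where
  toFun p := Fin.append p.1 p.2
  invFun z := (fun i => z (Fin.castAdd M i), fun j => z (Fin.natAdd N j))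
  left_inv p := by
    refine Prod.ext ?_ ?_ <;> funext i
    · simp [Fin.append_left]
    · simp [Fin.append_right]
  right_inv z := by
    funext j
    rcases castOrNat j with ⟨i, rfl⟩ | ⟨i, rfl⟩
    · exact Fin.append_left _ _ i
    · exact Fin.append_right _ _ i

lemma walsh_join (H : (Fin N → ZMod 2) → (Fin M → ZMod 2) → ZMod 2) (ω : Fin (N + M) → ZMod 2) :
    walsh (join H) ω = walsh2 H (fun i => ω (Fin.castAdd M i)) (fun j => ω (Fin.natAdd N j)) := by
  unfold walsh walsh2
  rw [← Equiv.sum_comp (appendEquiv (N := N) (M := M))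
    (fun z => chi (join H z + ∑ k, ω k * z k)), Fintype.sum_prod_type]
  refine Finset.sum_congr rfl fun x _ => Finset.sum_congr rfl fun y _ => ?_
  congr 1
  have h1 : join H (appendEquiv (x, y)) = H x y := by
    unfold join appendEquiv
    simp only [Equiv.coe_fn_mk]
    congr 1 <;> funext i
    · exact Fin.append_left _ _ i
    · exact Fin.append_right _ _ i
  have h2 : ∑ k, ω k * (appendEquiv (x, y)) k
      = (∑ i, ω (Fin.castAdd M i) * x i) + ∑ j, ω (Fin.natAdd N j) * y j := by
    show ∑ k : Fin (N + M), (fun k => ω k * (appendEquiv (x, y)) k) k = _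
    rw [Fin.sum_univ_add]
    congr 1 <;> refine Finset.sum_congr rfl fun i _ => ?_
    · show ω _ * Fin.append x y _ = _
      rw [Fin.append_left]
    · show ω _ * Fin.append x y _ = _
      rw [Fin.append_right]
  rw [h1, h2, add_assoc]

end WalshJoin

lemma affine_walsh {k : ℕ} (F : (Fin k → ZMod 2) → ZMod 2) (hdeg : algDeg F ≤ 1) :
    ∃ c, walsh F c = 2 ^ k * chi (anf F ∅) := by
  classical
  refine ⟨fun i => anf F {i}, ?_⟩
  have key : ∀ x, F x + ∑ i, anf F {i} * x i = anf F ∅ := by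
    intro x
    have h1 : F x = ∑ S ∈ (supp x).powerset.filter (fun S => S.card ≤ 1), anf F S := by
      rw [eval_anf' F x]
      rw [Finset.sum_filter_of_ne]
      intro S _ hS
      calc S.card ≤ algDeg F := Finset.le_sup (Finset.mem_filter.mpr ⟨Finset.mem_univ S, hS⟩)
      _ ≤ 1 := hdeg
    have h2 : (supp x).powerset.filter (fun S => S.card ≤ 1)
        = insert ∅ ((supp x).image fun i => ({i} : Finset (Fin k))) := by
      ext S
      simp only [Finset.mem_filter, Finset.mem_powerset, Finset.mem_insert, Finset.mem_image]
      constructor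
      · rintro ⟨hsub, hcard⟩
        rcases Finset.eq_empty_or_nonempty S with rfl | ⟨a, haS⟩
        · exact Or.inl rfl
        · have hSa : S = {a} := Finset.eq_singleton_iff_unique_mem.mpr
            ⟨haS, fun b hb => Finset.card_le_one.mp hcard b hb a haS⟩
          exact Or.inr ⟨a, hsub (hSa ▸ Finset.mem_singleton_self a), hSa.symm⟩
      · rintro (rfl | ⟨i, hi, rfl⟩)
        · exact ⟨Finset.empty_subset _, by simp⟩
        · exact ⟨Finset.singleton_subset_iff.mpr hi, by simp⟩
    have h3 : ∅ ∉ (supp x).image fun i => ({i} : Finset (Fin k)) := by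
      intro hc
      obtain ⟨i, _, hi⟩ := Finset.mem_image.mp hc
      exact Finset.singleton_ne_empty i hi
    have h4 : ∑ i, anf F {i} * x i = ∑ i ∈ supp x, anf F {i} := by
      have : ∀ i, anf F {i} * x i = if i ∈ supp x then anf F {i} else 0 := by
        intro i
        by_cases hxi : x i = 0
        · simp [supp, hxi]
        · have hx1 : x i = 1 := by
            rcases zmod2_cases (x i) with h' | h'
            · exact absurd h' hxi
            · exact h'
          have hmem : i ∈ supp x := by simp [supp, hxi]
          rw [hx1, mul_one, if_pos hmem]
      simp only [this, Finset.sum_ite_mem, Finset.univ_inter]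
    rw [h1, h2, Finset.sum_insert h3,
      Finset.sum_image (fun a _ b _ hab => Finset.singleton_injective hab), h4]
    rw [add_assoc, add_self_zmod2, add_zero]
  unfold walsh
  have : ∀ x : Fin k → ZMod 2, chi (F x + ∑ i, anf F {i} * x i) = chi (anf F ∅) := by
    intro x; rw [key x]
  rw [Finset.sum_congr rfl (fun x _ => this x), Finset.sum_const]
  have hcard : (Finset.univ : Finset (Fin k → ZMod 2)).card = 2 ^ k := by
    simp [Finset.card_univ]
  rw [hcard, nsmul_eq_mul]
  push_cast
  ring


/-- the algebraic degree of the modified indirect sum of two bent functions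
(in `n > 2` and `m > 2` variables) satisfies `2 ≤ deg h ≤ (n+m-2)/2 - 1`. -/
theorem degree_of_restriction_indirect_sum (n m : ℕ)
    (hn2 : 2 < n) (hm2 : 2 < m) (hn : Even n) (hm : Even m)
    (f : (Fin n → ZMod 2) → ZMod 2) (g : (Fin m → ZMod 2) → ZMod 2)
    (hf : IsBent n f) (hg : IsBent m g) (μ : Fin n) (ρ : Fin m)
    (f0 f1 : (Fin (n - 1) → ZMod 2) → ZMod 2)
    (g0 g1 : (Fin (m - 1) → ZMod 2) → ZMod 2)
    (hf0 : ∀ x, f0 x = f (insertAt μ 0 x)) (hf1 : ∀ x, f1 x = f (insertAt μ 1 x))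
    (hg0 : ∀ y, g0 y = g (insertAt ρ 0 y)) (hg1 : ∀ y, g1 y = g (insertAt ρ 1 y))
    (h : (Fin (n - 1) → ZMod 2) → (Fin (m - 1) → ZMod 2) → ZMod 2)
    (hh : ∀ x y, h x y = f0 x + g0 y + (f0 x + f1 x) * (g0 y + g1 y)) :
    2 ≤ algDeg (join h) ∧ algDeg (join h) ≤ (n + m - 2) / 2 - 1 := by
  classical
  have hneven : n = 2 * (n / 2) := by obtain ⟨r, hr⟩ := hn; omega
  have hmeven : m = 2 * (m / 2) := by obtain ⟨r, hr⟩ := hm; omega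
  have hn4 : 4 ≤ n := by omega
  have hm4 : 4 ≤ m := by omega
  constructor
  · -- lower bound
    by_contra hcon
    have hdeg1 : algDeg (join h) ≤ 1 := by omega
    obtain ⟨c, hc⟩ := affine_walsh (join h) hdeg1
    rw [walsh_join h c] at hc
    have hb := h_walsh2 hn2 hm2 hn hm f g hf hg μ ρ f0 f1 g0 g1 hf0 hf1 hg0 hg1 h hh
      (fun i => c (Fin.castAdd (m - 1) i)) (fun j => c (Fin.natAdd (n - 1) j))
    have hlt : (2:ℤ) ^ (n / 2 + m / 2 - 1) < 2 ^ (n - 1 + (m - 1)) := by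
      apply pow_lt_pow_right₀ one_lt_two
      omega
    have hchi : chi (anf (join h) ∅) = 1 ∨ chi (anf (join h) ∅) = -1 := by
      rcases zmod2_cases (anf (join h) ∅) with h' | h' <;> rw [h'] <;> [left; right] <;> decide
    have hpos : (0:ℤ) < 2 ^ (n / 2 + m / 2 - 1) := by positivity
    have hpos2 : (0:ℤ) < 2 ^ (n - 1 + (m - 1)) := by positivity
    rcases hb with he | he <;> rw [he] at hc <;> rcases hchi with h' | h' <;>
      rw [h'] at hc <;> nlinarith [hc]
  · -- upper bound
    have hbound : (n + m - 2) / 2 - 1 = n / 2 + m / 2 - 2 := by omega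
    rw [hbound]
    apply Finset.sup_le
    intro S hS
    have hSne : anf (join h) S ≠ 0 := (Finset.mem_filter.mp hS).2
    set Df : (Fin (n - 1) → ZMod 2) → ZMod 2 := fun x => f0 x + f1 x with hDf
    set Dg : (Fin (m - 1) → ZMod 2) → ZMod 2 := fun y => g0 y + g1 y with hDg
    have hexp : anf (join h) S
        = (((pR S).powerset.card : ZMod 2)) * anf f0 (pL S)
          + (((pL S).powerset.card : ZMod 2)) * anf g0 (pR S)
          + anf Df (pL S) * anf Dg (pR S) := by
      rw [anf_join h S]
      have e1 : ∀ A ∈ (pL S).powerset,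
          ∑ B ∈ (pR S).powerset, h (ind A) (ind B)
            = (((pR S).powerset.card : ZMod 2)) * f0 (ind A)
              + (∑ B ∈ (pR S).powerset, g0 (ind B))
              + Df (ind A) * ∑ B ∈ (pR S).powerset, Dg (ind B) := by
        intro A _
        rw [show (((pR S).powerset.card : ZMod 2)) * f0 (ind A)
            = ∑ _B ∈ (pR S).powerset, f0 (ind A) by rw [Finset.sum_const, nsmul_eq_mul],
          Finset.mul_sum, ← Finset.sum_add_distrib, ← Finset.sum_add_distrib]
        refine Finset.sum_congr rfl fun B _ => ?_
        rw [hh]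
      rw [Finset.sum_congr rfl e1, Finset.sum_add_distrib, Finset.sum_add_distrib]
      congr 1
      · congr 1
        · rw [← Finset.mul_sum, anf_def]
        · rw [Finset.sum_const, nsmul_eq_mul, anf_def]
      · rw [← Finset.sum_mul, anf_def, anf_def]
    -- now the case analysis
    have hcardS : S.card = (pL S).card + (pR S).card := card_split S
    have hterm : (((pR S).powerset.card : ZMod 2)) * anf f0 (pL S) ≠ 0
        ∨ (((pL S).powerset.card : ZMod 2)) * anf g0 (pR S) ≠ 0
        ∨ anf Df (pL S) * anf Dg (pR S) ≠ 0 := by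
      by_contra hall
      push_neg at hall
      rw [hexp, hall.1, hall.2.1, hall.2.2] at hSne
      simp at hSne
    have hcardimL : ((pL S).image (emb μ)).card = (pL S).card :=
      Finset.card_image_of_injective _ (emb_inj μ)
    have hcardimR : ((pR S).image (emb ρ)).card = (pR S).card :=
      Finset.card_image_of_injective _ (emb_inj ρ)
    rcases hterm with ht | ht | ht
    · have h1 : anf f0 (pL S) ≠ 0 := fun hz => ht (by rw [hz, mul_zero])
      have h2 : ((pR S).powerset.card : ZMod 2) ≠ 0 := fun hz => ht (by rw [hz, zero_mul])
      have hR0 : (pR S).card = 0 := by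
        by_contra hR
        apply h2
        rw [Finset.card_powerset]
        have : (2 : ZMod 2) = 0 := by decide
        rw [show ((2 ^ (pR S).card : ℕ) : ZMod 2) = (2 : ZMod 2) ^ (pR S).card by push_cast; ring,
          this, zero_pow hR]
      have h3 : anf f ((pL S).image (emb μ)) ≠ 0 := by
        rw [← anf_restrict0 μ f f0 hf0]
        exact h1
      have h4 : ((pL S).image (emb μ)).card ≤ n / 2 := by
        by_contra h5
        exact h3 (bent_anf_card hn4 hn f hf _ (by omega))
      rw [hcardimL] at h4
      omega
    · have h1 : anf g0 (pR S) ≠ 0 := fun hz => ht (by rw [hz, mul_zero])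
      have h2 : ((pL S).powerset.card : ZMod 2) ≠ 0 := fun hz => ht (by rw [hz, zero_mul])
      have hL0 : (pL S).card = 0 := by
        by_contra hL
        apply h2
        rw [Finset.card_powerset]
        have : (2 : ZMod 2) = 0 := by decide
        rw [show ((2 ^ (pL S).card : ℕ) : ZMod 2) = (2 : ZMod 2) ^ (pL S).card by push_cast; ring,
          this, zero_pow hL]
      have h3 : anf g ((pR S).image (emb ρ)) ≠ 0 := by
        rw [← anf_restrict0 ρ g g0 hg0]
        exact h1
      have h4 : ((pR S).image (emb ρ)).card ≤ m / 2 := by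
        by_contra h5
        exact h3 (bent_anf_card hm4 hm g hg _ (by omega))
      rw [hcardimR] at h4
      omega
    · have h1 : anf Df (pL S) ≠ 0 := fun hz => ht (by rw [hz, zero_mul])
      have h2 : anf Dg (pR S) ≠ 0 := fun hz => ht (by rw [hz, mul_zero])
      have h3 : anf f (insert μ ((pL S).image (emb μ))) ≠ 0 := by
        rw [← anf_restrictD μ f f0 f1 hf0 hf1]
        exact h1
      have h4 : anf g (insert ρ ((pR S).image (emb ρ))) ≠ 0 := by
        rw [← anf_restrictD ρ g g0 g1 hg0 hg1]
        exact h2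
      have h5 : (insert μ ((pL S).image (emb μ))).card ≤ n / 2 := by
        by_contra h6
        exact h3 (bent_anf_card hn4 hn f hf _ (by omega))
      have h6 : (insert ρ ((pR S).image (emb ρ))).card ≤ m / 2 := by
        by_contra h7
        exact h4 (bent_anf_card hm4 hm g hg _ (by omega))
      rw [Finset.card_insert_of_notMem (mu_notmem_image μ _), hcardimL] at h5
      rw [Finset.card_insert_of_notMem (mu_notmem_image ρ _), hcardimR] at h6
      omega
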